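/- Let n ∈ ℕ, let B, C, X, Z be n×n complex matrices such that X² + B·X + C = 0, Z² + B·Z + C = 0, and X − Z is invertible, and let f : ℝ → ℂⁿ be continuous. Define U(t) = (exp(t·X) − exp(t·Z))·(X − Z)⁻¹ and U'(t) = (X·exp(t·X) − Z·exp(t·Z))·(X − Z)⁻¹. Then for any u₀, u₁ ∈ ℂⁿ, the function x(t) = U'(t)·u₀ + U(t)·(u₁ + B·u₀) + ∫₀ᵗ U(t − s)·f(s) ds is twice differentiable and satisfies x''(t) + B·x'(t) + C·x(t) = f(t) for all t ∈ ℝ, together with the initial conditions x(0) = u₀ and x'(0) = u₁. -/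

import Mathlib

open NormedSpace

noncomputable def matCLM (n : ℕ) : Matrix (Fin n) (Fin n) ℂ →ₐ[ℂ] ((Fin n → ℂ) →L[ℂ] (Fin n → ℂ)) :=
  ((Module.End.toContinuousLinearMap (𝕜 := ℂ) (Fin n → ℂ)).toAlgHom).comp
    (Matrix.toLinAlgEquiv' (R := ℂ)).toAlgHom

lemma matCLM_apply (n : ℕ) (M : Matrix (Fin n) (Fin n) ℂ) (v : Fin n → ℂ) :
    matCLM n M v = M.mulVec v := rfl

lemma matCLM_continuous (n : ℕ) : Continuous (matCLM n) :=
  (matCLM n).toLinearMap.continuous_of_finiteDimensional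

lemma matCLM_exp (n : ℕ) (M : Matrix (Fin n) (Fin n) ℂ) :
    matCLM n (exp M) = exp (matCLM n M) := by
  letI : SeminormedRing (Matrix (Fin n) (Fin n) ℂ) := Matrix.linftyOpSemiNormedRing
  letI : NormedRing (Matrix (Fin n) (Fin n) ℂ) := Matrix.linftyOpNormedRing
  letI : NormedAlgebra ℂ (Matrix (Fin n) (Fin n) ℂ) := Matrix.linftyOpNormedAlgebra
  letI : NormedAlgebra ℚ (Matrix (Fin n) (Fin n) ℂ) := .restrictScalars ℚ ℂ _
  exact map_exp (matCLM n) (matCLM_continuous n) M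

section exp
variable {𝔸 : Type*} [NormedRing 𝔸] [NormedAlgebra ℂ 𝔸] [CompleteSpace 𝔸]

noncomputable def eAt (A : 𝔸) (t : ℝ) : 𝔸 := exp ((t : ℂ) • A)

lemma eAt_hasDerivAt (A : 𝔸) (t : ℝ) : HasDerivAt (eAt A) (A * eAt A t) t := by
  unfold eAt
  have h := (hasDerivAt_exp_smul_const' A (t : ℂ)).scomp t Complex.ofRealCLM.hasDerivAt
  simpa [Function.comp_def] using h

lemma eAt_add (A : 𝔸) (s t : ℝ) : eAt A (s + t) = eAt A s * eAt A t := by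
  unfold eAt
  rw [show ((s + t : ℝ) : ℂ) = (s : ℂ) + (t : ℂ) by push_cast; ring, add_smul]
  letI : NormedAlgebra ℚ 𝔸 := .restrictScalars ℚ ℂ 𝔸
  exact exp_add_of_commute (((Commute.refl A).smul_left _).smul_right _)

omit [CompleteSpace 𝔸] in
lemma eAt_zero (A : 𝔸) : eAt A 0 = 1 := by
  unfold eAt; rw [Complex.ofReal_zero, zero_smul, exp_zero]

lemma eAt_neg_cancel (A : 𝔸) (t : ℝ) : eAt A t * eAt A (-t) = 1 := by
  rw [← eAt_add, add_neg_cancel, eAt_zero]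

omit [CompleteSpace 𝔸] in
lemma eAt_commute (A : 𝔸) (t : ℝ) : A * eAt A t = eAt A t * A :=
  (((Commute.refl A).smul_right ((t : ℂ))).exp_right).eq

lemma eAt_continuous (A : 𝔸) : Continuous (eAt A) :=
  continuous_iff_continuousAt.2 fun t => (eAt_hasDerivAt A t).continuousAt

end exp

section deriv
variable {F G : Type*} [NormedAddCommGroup F] [NormedSpace ℂ F]
  [NormedAddCommGroup G] [NormedSpace ℂ G]

lemma clmCompHasDerivAt (L : F →L[ℂ] G) {ψ : ℝ → F} {ψ' : F} {t : ℝ}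
    (h : HasDerivAt ψ ψ' t) : HasDerivAt (fun s => L (ψ s)) (L ψ') t :=
  (L.restrictScalars ℝ).hasFDerivAt.comp_hasDerivAt t h

lemma clmApplyHasDerivAt {ψ : ℝ → F →L[ℂ] G} {Ψ : F →L[ℂ] G} {u : ℝ → F} {u' : F} {t : ℝ}
    (hψ : HasDerivAt ψ Ψ t) (hu : HasDerivAt u u' t) :
    HasDerivAt (fun s => ψ s (u s)) (Ψ (u t) + ψ t u') t := by
  have h1 : HasDerivAt (fun s => (ψ s).restrictScalars ℝ) (Ψ.restrictScalars ℝ) t :=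
    clmCompHasDerivAt (ContinuousLinearMap.restrictScalarsL ℂ F G ℝ ℂ) hψ
  exact h1.clm_apply hu

end deriv

set_option maxHeartbeats 1000000 in
/-- variation-of-constants formula via a complete pair of right solvents:
`x(t) = U'(t)u₀ + U(t)(u₁ + Bu₀) + ∫₀ᵗ U(t−s)f(s) ds` is twice differentiable and solves
`x'' + Bx' + Cx = f` with `x(0) = u₀`, `x'(0) = u₁`. -/
theorem solution_of_initial_value_problem (n : ℕ) (B C X Z : Matrix (Fin n) (Fin n) ℂ)
    (hX : X ^ 2 + B * X + C = 0) (hZ : Z ^ 2 + B * Z + C = 0) (hXZ : IsUnit (X - Z))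
    (f : ℝ → (Fin n → ℂ)) (hf : Continuous f)
    (U V : ℝ → Matrix (Fin n) (Fin n) ℂ)
    (hU : ∀ t : ℝ, U t =
      (NormedSpace.exp ((t : ℂ) • X) - NormedSpace.exp ((t : ℂ) • Z)) * (X - Z)⁻¹)
    (hV : ∀ t : ℝ, V t =
      (X * NormedSpace.exp ((t : ℂ) • X) - Z * NormedSpace.exp ((t : ℂ) • Z)) * (X - Z)⁻¹)
    (u₀ u₁ : Fin n → ℂ) (x : ℝ → (Fin n → ℂ))
    (hx : ∀ t : ℝ, x t = (V t).mulVec u₀ + (U t).mulVec (u₁ + B.mulVec u₀) +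
      ∫ s in (0:ℝ)..t, (U (t - s)).mulVec (f s)) :
    ∃ x' x'' : ℝ → (Fin n → ℂ),
      (∀ t : ℝ, HasDerivAt x (x' t) t) ∧
      (∀ t : ℝ, HasDerivAt x' (x'' t) t) ∧
      (∀ t : ℝ, x'' t + B.mulVec (x' t) + C.mulVec (x t) = f t) ∧
      x 0 = u₀ ∧ x' 0 = u₁ := by
  classical
  have hdet : IsUnit (X - Z).det := (Matrix.isUnit_iff_isUnit_det _).mp hXZ
  have hinv : (X - Z) * (X - Z)⁻¹ = 1 := Matrix.mul_nonsing_inv _ hdet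
  set AX : (Fin n → ℂ) →L[ℂ] (Fin n → ℂ) := matCLM n X with hAXdef
  set AZ : (Fin n → ℂ) →L[ℂ] (Fin n → ℂ) := matCLM n Z with hAZdef
  set BB : (Fin n → ℂ) →L[ℂ] (Fin n → ℂ) := matCLM n B with hBBdef
  set CC : (Fin n → ℂ) →L[ℂ] (Fin n → ℂ) := matCLM n C with hCCdef
  set p : (Fin n → ℂ) →L[ℂ] (Fin n → ℂ) := matCLM n (X - Z)⁻¹ with hpdef
  set c : Fin n → ℂ := u₁ + B.mulVec u₀ with hcdef
  set a : Fin n → ℂ := AX (p u₀) + p c with hadef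
  set b : Fin n → ℂ := AZ (p u₀) + p c with hbdef
  set gX : ℝ → (Fin n → ℂ) := fun s => eAt AX (-s) (p (f s)) with hgXdef
  set gZ : ℝ → (Fin n → ℂ) := fun s => eAt AZ (-s) (p (f s)) with hgZdef
  set GX : ℝ → (Fin n → ℂ) := fun t => ∫ s in (0:ℝ)..t, gX s with hGXdef
  set GZ : ℝ → (Fin n → ℂ) := fun t => ∫ s in (0:ℝ)..t, gZ s with hGZdef
  -- basic facts
  have hφe : ∀ (M : Matrix (Fin n) (Fin n) ℂ) (t : ℝ),
      matCLM n (NormedSpace.exp ((t : ℂ) • M)) = eAt (matCLM n M) t := by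
    intro M t
    rw [matCLM_exp, map_smul]; rfl
  have hUop : ∀ t : ℝ, matCLM n (U t) = (eAt AX t - eAt AZ t) * p := by
    intro t; rw [hU t, map_mul, map_sub, hφe, hφe]
  have hVop : ∀ t : ℝ, matCLM n (V t) = (AX * eAt AX t - AZ * eAt AZ t) * p := by
    intro t; rw [hV t, map_mul, map_sub, map_mul, map_mul, hφe, hφe]
  -- continuity / FTC
  have hgXc : Continuous gX :=
    Continuous.clm_apply ((eAt_continuous AX).comp continuous_neg) (p.continuous.comp hf)
  have hgZc : Continuous gZ :=
    Continuous.clm_apply ((eAt_continuous AZ).comp continuous_neg) (p.continuous.comp hf)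
  have hGXd : ∀ t : ℝ, HasDerivAt GX (gX t) t :=
    fun t => (hgXc.integral_hasStrictDerivAt 0 t).hasDerivAt
  have hGZd : ∀ t : ℝ, HasDerivAt GZ (gZ t) t :=
    fun t => (hgZc.integral_hasStrictDerivAt 0 t).hasDerivAt
  have hcancel : ∀ (A : (Fin n → ℂ) →L[ℂ] (Fin n → ℂ)) (t : ℝ) (v : Fin n → ℂ),
      eAt A t (eAt A (-t) v) = v := by
    intro A t v
    have h : eAt A t * eAt A (-t) = 1 := eAt_neg_cancel A t
    calc eAt A t (eAt A (-t) v) = (eAt A t * eAt A (-t)) v := rfl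
    _ = v := by rw [h]; exact ContinuousLinearMap.one_apply v
  have hXZp : ∀ v : Fin n → ℂ, AX (p v) - AZ (p v) = v := by
    intro v
    have h1 : matCLM n ((X - Z) * (X - Z)⁻¹) = 1 := by rw [hinv, map_one]
    have h2 := congrArg (fun L : (Fin n → ℂ) →L[ℂ] (Fin n → ℂ) => L v) h1
    simpa [map_mul, map_sub, ContinuousLinearMap.mul_apply, ContinuousLinearMap.sub_apply,
      ContinuousLinearMap.one_apply] using h2
  -- rewrite x
  have hx2 : ∀ t : ℝ, x t = eAt AX t (a + GX t) - eAt AZ t (b + GZ t) := by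
    intro t
    have hint : ∀ s : ℝ, (U (t - s)).mulVec (f s) = eAt AX t (gX s) - eAt AZ t (gZ s) := by
      intro s
      rw [← matCLM_apply, hUop]
      have h1 : eAt AX (t - s) = eAt AX t * eAt AX (-s) := by
        rw [sub_eq_add_neg, eAt_add]
      have h2 : eAt AZ (t - s) = eAt AZ t * eAt AZ (-s) := by
        rw [sub_eq_add_neg, eAt_add]
      simp [h1, h2, hgXdef, hgZdef, ContinuousLinearMap.sub_apply,
        ContinuousLinearMap.mul_apply]
    have hI : (∫ s in (0:ℝ)..t, (U (t - s)).mulVec (f s))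
        = eAt AX t (GX t) - eAt AZ t (GZ t) := by
      rw [intervalIntegral.integral_congr (g := fun s => eAt AX t (gX s) - eAt AZ t (gZ s))
        (fun s _ => hint s)]
      have i1 : IntervalIntegrable (fun s => eAt AX t (gX s)) MeasureTheory.volume 0 t :=
        (((eAt AX t).continuous.comp hgXc).intervalIntegrable 0 t)
      have i2 : IntervalIntegrable (fun s => eAt AZ t (gZ s)) MeasureTheory.volume 0 t :=
        (((eAt AZ t).continuous.comp hgZc).intervalIntegrable 0 t)
      rw [intervalIntegral.integral_sub i1 i2,
        ContinuousLinearMap.intervalIntegral_comp_comm _ (hgXc.intervalIntegrable 0 t),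
        ContinuousLinearMap.intervalIntegral_comp_comm _ (hgZc.intervalIntegrable 0 t)]
    have hcomX : ∀ v : Fin n → ℂ, AX (eAt AX t v) = eAt AX t (AX v) := by
      intro v
      have h := eAt_commute AX t
      calc AX (eAt AX t v) = (AX * eAt AX t) v := rfl
      _ = (eAt AX t * AX) v := by rw [h]
      _ = eAt AX t (AX v) := rfl
    have hcomZ : ∀ v : Fin n → ℂ, AZ (eAt AZ t v) = eAt AZ t (AZ v) := by
      intro v
      have h := eAt_commute AZ t
      calc AZ (eAt AZ t v) = (AZ * eAt AZ t) v := rfl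
      _ = (eAt AZ t * AZ) v := by rw [h]
      _ = eAt AZ t (AZ v) := rfl
    rw [hx t, hI, ← matCLM_apply n (V t) u₀, ← matCLM_apply n (U t) c, hVop, hUop,
      hadef, hbdef]
    simp only [ContinuousLinearMap.mul_apply, ContinuousLinearMap.sub_apply, map_add]
    rw [hcomX, hcomZ]
    abel
  refine ⟨fun t => (AX * eAt AX t) (a + GX t) - (AZ * eAt AZ t) (b + GZ t),
    fun t => (AX * (AX * eAt AX t)) (a + GX t) - (AZ * (AZ * eAt AZ t)) (b + GZ t) + f t,
    ?_, ?_, ?_, ?_, ?_⟩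
  · -- first derivative
    intro t
    have hxfun : x = fun s => eAt AX s (a + GX s) - eAt AZ s (b + GZ s) := funext hx2
    have hDX : HasDerivAt (fun s => eAt AX s (a + GX s))
        ((AX * eAt AX t) (a + GX t) + eAt AX t (gX t)) t :=
      clmApplyHasDerivAt (eAt_hasDerivAt AX t) ((hGXd t).const_add a)
    have hDZ : HasDerivAt (fun s => eAt AZ s (b + GZ s))
        ((AZ * eAt AZ t) (b + GZ t) + eAt AZ t (gZ t)) t :=
      clmApplyHasDerivAt (eAt_hasDerivAt AZ t) ((hGZd t).const_add b)
    have h := hDX.sub hDZ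
    rw [hxfun]
    convert h using 1
    case e'_4 => rfl
    case e'_5 => rfl
    case e'_6 => rfl
    case e'_8 => rfl
    have e1 : eAt AX t (gX t) = p (f t) := by
      simp only [hgXdef]; exact hcancel AX t (p (f t))
    have e2 : eAt AZ t (gZ t) = p (f t) := by
      simp only [hgZdef]; exact hcancel AZ t (p (f t))
    rw [e1, e2]
    abel
  · -- second derivative
    intro t
    have hDX : HasDerivAt (fun s => (AX * eAt AX s) (a + GX s))
        ((AX * (AX * eAt AX t)) (a + GX t) + (AX * eAt AX t) (gX t)) t := by
      have hpsi : HasDerivAt (fun s => AX * eAt AX s) (AX * (AX * eAt AX t)) t :=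
        clmCompHasDerivAt ((ContinuousLinearMap.compL ℂ (Fin n → ℂ) (Fin n → ℂ) (Fin n → ℂ)) AX) (eAt_hasDerivAt AX t)
      exact clmApplyHasDerivAt hpsi ((hGXd t).const_add a)
    have hDZ : HasDerivAt (fun s => (AZ * eAt AZ s) (b + GZ s))
        ((AZ * (AZ * eAt AZ t)) (b + GZ t) + (AZ * eAt AZ t) (gZ t)) t := by
      have hpsi : HasDerivAt (fun s => AZ * eAt AZ s) (AZ * (AZ * eAt AZ t)) t :=
        clmCompHasDerivAt ((ContinuousLinearMap.compL ℂ (Fin n → ℂ) (Fin n → ℂ) (Fin n → ℂ)) AZ) (eAt_hasDerivAt AZ t)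
      exact clmApplyHasDerivAt hpsi ((hGZd t).const_add b)
    have h := hDX.sub hDZ
    beta_reduce
    convert h using 1
    case e'_4 => rfl
    case e'_5 => rfl
    case e'_6 => rfl
    case e'_8 => rfl
    have e1 : (AX * eAt AX t) (gX t) = AX (p (f t)) := by
      have e1' : eAt AX t (gX t) = p (f t) := by
        simp only [hgXdef]; exact hcancel AX t (p (f t))
      calc (AX * eAt AX t) (gX t) = AX (eAt AX t (gX t)) := rfl
      _ = AX (p (f t)) := congrArg AX e1'
    have e2 : (AZ * eAt AZ t) (gZ t) = AZ (p (f t)) := by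
      have e2' : eAt AZ t (gZ t) = p (f t) := by
        simp only [hgZdef]; exact hcancel AZ t (p (f t))
      calc (AZ * eAt AZ t) (gZ t) = AZ (eAt AZ t (gZ t)) := rfl
      _ = AZ (p (f t)) := congrArg AZ e2'
    rw [e1, e2]
    have hfeq : f t = AX (p (f t)) - AZ (p (f t)) := (hXZp (f t)).symm
    conv_lhs => rw [hfeq]
    abel
  · -- the ODE
    intro t
    have hopfact : ∀ (W : Matrix (Fin n) (Fin n) ℂ) (AW : (Fin n → ℂ) →L[ℂ] (Fin n → ℂ)),
        AW = matCLM n W → W ^ 2 + B * W + C = 0 →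
        AW * (AW * eAt AW t) + BB * (AW * eAt AW t) + CC * eAt AW t = 0 := by
      intro W AW hAW hW
      have h0 : AW * AW + BB * AW + CC = 0 := by
        have h := congrArg (matCLM n) hW
        simp only [map_add, map_mul, map_pow, map_zero, pow_two] at h
        rw [hAW, hBBdef, hCCdef]
        exact h
      calc AW * (AW * eAt AW t) + BB * (AW * eAt AW t) + CC * eAt AW t
          = (AW * AW + BB * AW + CC) * eAt AW t := by noncomm_ring
      _ = 0 := by rw [h0, zero_mul]
    have hopX := hopfact X AX hAXdef hX
    have hopZ := hopfact Z AZ hAZdef hZ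
    have key : ∀ vX vZ : Fin n → ℂ,
        ((AX * (AX * eAt AX t)) vX - (AZ * (AZ * eAt AZ t)) vZ + f t)
          + BB ((AX * eAt AX t) vX - (AZ * eAt AZ t) vZ)
          + CC (eAt AX t vX - eAt AZ t vZ) = f t := by
      intro vX vZ
      have hptX := congrArg (fun L : (Fin n → ℂ) →L[ℂ] (Fin n → ℂ) => L vX) hopX
      have hptZ := congrArg (fun L : (Fin n → ℂ) →L[ℂ] (Fin n → ℂ) => L vZ) hopZ
      simp only [ContinuousLinearMap.add_apply, ContinuousLinearMap.mul_apply,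
        ContinuousLinearMap.zero_apply] at hptX hptZ
      have eX : AX (AX (eAt AX t vX)) = -(CC (eAt AX t vX)) - BB (AX (eAt AX t vX)) :=
        eq_sub_of_add_eq (eq_neg_of_add_eq_zero_left hptX)
      have eZ : AZ (AZ (eAt AZ t vZ)) = -(CC (eAt AZ t vZ)) - BB (AZ (eAt AZ t vZ)) :=
        eq_sub_of_add_eq (eq_neg_of_add_eq_zero_left hptZ)
      simp only [ContinuousLinearMap.mul_apply, map_sub]
      rw [eX, eZ]
      abel
    show ((AX * (AX * eAt AX t)) (a + GX t) - (AZ * (AZ * eAt AZ t)) (b + GZ t) + f t)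
        + B.mulVec ((AX * eAt AX t) (a + GX t) - (AZ * eAt AZ t) (b + GZ t))
        + C.mulVec (x t) = f t
    rw [hx2 t, ← matCLM_apply n B, ← matCLM_apply n C, ← hBBdef, ← hCCdef]
    exact key (a + GX t) (b + GZ t)
  · -- x 0 = u₀
    rw [hx2 0]
    have h0X : GX 0 = 0 := by simp only [hGXdef]; exact intervalIntegral.integral_same
    have h0Z : GZ 0 = 0 := by simp only [hGZdef]; exact intervalIntegral.integral_same
    rw [h0X, h0Z, eAt_zero, eAt_zero, add_zero, add_zero, hadef, hbdef]
    simp only [ContinuousLinearMap.one_apply]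
    conv_rhs => rw [← hXZp u₀]
    abel
  · -- x' 0 = u₁
    show (AX * eAt AX 0) (a + GX 0) - (AZ * eAt AZ 0) (b + GZ 0) = u₁
    have h0X : GX 0 = 0 := by simp only [hGXdef]; exact intervalIntegral.integral_same
    have h0Z : GZ 0 = 0 := by simp only [hGZdef]; exact intervalIntegral.integral_same
    rw [h0X, h0Z, eAt_zero, eAt_zero, mul_one, mul_one, add_zero, add_zero]
    have hm : (X ^ 2 - Z ^ 2) * (X - Z)⁻¹ = -B := by
      have hdiff : X ^ 2 - Z ^ 2 + B * (X - Z) = 0 := by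
        calc X ^ 2 - Z ^ 2 + B * (X - Z)
            = (X ^ 2 + B * X + C) - (Z ^ 2 + B * Z + C) := by noncomm_ring
        _ = 0 := by rw [hX, hZ, sub_zero]
      have h2 : X ^ 2 - Z ^ 2 = -(B * (X - Z)) := eq_neg_of_add_eq_zero_left hdiff
      rw [h2, neg_mul, mul_assoc, hinv, mul_one]
    have hsq : AX (AX (p u₀)) - AZ (AZ (p u₀)) = -(BB u₀) := by
      have h1 : matCLM n ((X ^ 2 - Z ^ 2) * (X - Z)⁻¹) = matCLM n (-B) := congrArg _ hm
      have h2 := congrArg (fun L : (Fin n → ℂ) →L[ℂ] (Fin n → ℂ) => L u₀) h1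
      simp only [map_mul, map_sub, map_neg, map_pow, pow_two, sub_mul,
        ContinuousLinearMap.mul_apply, ContinuousLinearMap.sub_apply,
        ContinuousLinearMap.neg_apply] at h2
      rw [hAXdef, hAZdef, hpdef, hBBdef]
      exact h2
    have hc2 : AX (p c) - AZ (p c) = c := hXZp c
    have hBu : BB u₀ = B.mulVec u₀ := matCLM_apply n B u₀
    calc AX a - AZ b
        = (AX (AX (p u₀)) - AZ (AZ (p u₀))) + (AX (p c) - AZ (p c)) := by
          rw [hadef, hbdef, map_add AX (AX (p u₀)) (p c), map_add AZ (AZ (p u₀)) (p c)]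
          abel
    _ = -(BB u₀) + c := by rw [hsq, hc2]
    _ = u₁ := by rw [hBu, hcdef]; abel
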